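/- Let X, Y be finite sets, P a PMF on X, and V a channel from X to Y. Then ∑_{y : PV(y) > 0} PV(y) log(1 / P(supp V(·|y))) ≤ I(P,V), where supp V(·|y) = {x : V(y|x) > 0}, P(supp V(·|y)) = ∑_{x : V(y|x)>0} P(x), PV(y) = ∑_x P(x)V(y|x), and I(P,V) = ∑_{x,y : V(y|x)>0} P(x)V(y|x) log(V(y|x)/PV(y)). -/

import Mathlib

open Finset

lemma one_sub_inv_le_log' {t : ℝ} (ht : 0 < t) : 1 - 1/t ≤ Real.log t := by
  have h := Real.log_le_sub_one_of_pos (x := 1/t) (by positivity)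
  rw [Real.log_div one_ne_zero ht.ne', Real.log_one] at h
  linarith

lemma key' {X : Type*} [Fintype X] (P W : X → ℝ) (hP0 : ∀ x, 0 ≤ P x)
    (hW0 : ∀ x, 0 ≤ W x) (hW1 : ∀ x, W x ≤ 1)
    (hA : 0 < ∑ x, P x * W x) :
    (∑ x, P x * W x) * Real.log (1 / ∑ x ∈ univ.filter (fun x => 0 < W x), P x)
      ≤ ∑ x ∈ univ.filter (fun x => 0 < W x), P x * W x * Real.log (W x / ∑ x', P x' * W x') := by
  set A := ∑ x, P x * W x with hAdef
  set S := univ.filter (fun x => 0 < W x) with hS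
  set Q := ∑ x ∈ S, P x with hQ
  have hAS : A = ∑ x ∈ S, P x * W x := by
    rw [hAdef]
    refine (Finset.sum_subset (Finset.subset_univ S) ?_).symm
    intro x _ hx
    have : W x = 0 := by
      by_contra h
      exact hx (Finset.mem_filter.mpr ⟨Finset.mem_univ x, lt_of_le_of_ne (hW0 x) (Ne.symm h)⟩)
    simp [this]
  have hAQ : A ≤ Q := by
    rw [hAS, hQ]
    exact Finset.sum_le_sum fun x _ => by
      calc P x * W x ≤ P x * 1 := mul_le_mul_of_nonneg_left (hW1 x) (hP0 x)
      _ = P x := mul_one _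
  have hQpos : 0 < Q := lt_of_lt_of_le hA hAQ
  have hLHS : A * Real.log (1 / Q) = ∑ x ∈ S, P x * W x * Real.log (1 / Q) := by
    rw [← Finset.sum_mul, ← hAS]
  rw [hLHS]
  rw [← sub_nonneg, ← Finset.sum_sub_distrib]
  have hstep : ∀ x ∈ S, P x * W x - P x * (A / Q) ≤
      P x * W x * Real.log (W x / A) - P x * W x * Real.log (1 / Q) := by
    intro x hx
    have hWx : 0 < W x := (Finset.mem_filter.mp hx).2
    rcases eq_or_lt_of_le (hP0 x) with h0 | hPx
    · simp [← h0]
    · have ht : 0 < W x * Q / A := by positivity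
      have hlog : Real.log (W x / A) - Real.log (1 / Q) = Real.log (W x * Q / A) := by
        rw [Real.log_div hWx.ne' hA.ne', Real.log_div one_ne_zero hQpos.ne',
          Real.log_div (by positivity) hA.ne', Real.log_mul hWx.ne' hQpos.ne', Real.log_one]
        ring
      have h1 := one_sub_inv_le_log' ht
      have h2 : P x * W x * (1 - 1/(W x * Q / A)) ≤ P x * W x * Real.log (W x * Q / A) :=
        mul_le_mul_of_nonneg_left h1 (by positivity)
      have h3 : P x * W x * (1 - 1/(W x * Q / A)) = P x * W x - P x * (A / Q) := by
        field_simp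
      calc P x * W x - P x * (A / Q) = P x * W x * (1 - 1/(W x * Q / A)) := h3.symm
        _ ≤ P x * W x * Real.log (W x * Q / A) := h2
        _ = P x * W x * (Real.log (W x / A) - Real.log (1 / Q)) := by rw [hlog]
        _ = P x * W x * Real.log (W x / A) - P x * W x * Real.log (1 / Q) := by ring
  calc (0:ℝ) = ∑ x ∈ S, (P x * W x - P x * (A / Q)) := by
        rw [Finset.sum_sub_distrib, ← hAS, ← Finset.sum_mul, ← hQ]
        field_simp
        ring
    _ ≤ _ := Finset.sum_le_sum hstep

theorem sum_log_inv_support_le_mutualInfo {X Y : Type*} [Fintype X] [Fintype Y]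
    (P : X → ℝ) (hP0 : ∀ x, 0 ≤ P x) (hP1 : ∑ x, P x = 1)
    (V : X → Y → ℝ) (hV0 : ∀ x y, 0 ≤ V x y) (hV1 : ∀ x, ∑ y, V x y = 1) :
    ∑ y ∈ univ.filter (fun y => 0 < ∑ x, P x * V x y),
        (∑ x, P x * V x y) *
          Real.log (1 / ∑ x ∈ univ.filter (fun x => 0 < V x y), P x)
      ≤ ∑ x, ∑ y ∈ univ.filter (fun y => 0 < V x y),
          P x * V x y * Real.log (V x y / ∑ x', P x' * V x' y) := by
  have hRHS : ∑ x, ∑ y ∈ univ.filter (fun y => 0 < V x y),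
      P x * V x y * Real.log (V x y / ∑ x', P x' * V x' y)
      = ∑ y, ∑ x, if 0 < V x y then
          P x * V x y * Real.log (V x y / ∑ x', P x' * V x' y) else 0 := by
    rw [Finset.sum_comm]
    exact Finset.sum_congr rfl fun x _ => Finset.sum_filter _ _
  rw [hRHS]
  rw [← Finset.sum_filter_add_sum_filter_not univ (fun y => 0 < ∑ x, P x * V x y)]
  have hzero : ∑ y ∈ univ.filter (fun y => ¬ 0 < ∑ x, P x * V x y),
      ∑ x, (if 0 < V x y then
        P x * V x y * Real.log (V x y / ∑ x', P x' * V x' y) else 0) = 0 := by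
    refine Finset.sum_eq_zero fun y hy => Finset.sum_eq_zero fun x _ => ?_
    have hA0 : ∑ x, P x * V x y = 0 := by
      have := (Finset.mem_filter.mp hy).2
      have hn : 0 ≤ ∑ x, P x * V x y :=
        Finset.sum_nonneg fun x _ => mul_nonneg (hP0 x) (hV0 x y)
      exact le_antisymm (not_lt.mp this) hn
    have hterm : P x * V x y = 0 :=
      (Finset.sum_eq_zero_iff_of_nonneg
        (fun x _ => mul_nonneg (hP0 x) (hV0 x y))).mp hA0 x (Finset.mem_univ x)
    split_ifs with h
    · rw [hterm, zero_mul]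
    · rfl
  rw [hzero, add_zero]
  refine Finset.sum_le_sum fun y hy => ?_
  have hAy : 0 < ∑ x, P x * V x y := (Finset.mem_filter.mp hy).2
  have hW1 : ∀ x, V x y ≤ 1 := fun x => by
    rw [← hV1 x]
    exact Finset.single_le_sum (fun y' _ => hV0 x y') (Finset.mem_univ y)
  have hk := key' P (fun x => V x y) hP0 (fun x => hV0 x y) hW1 hAy
  calc (∑ x, P x * V x y) * Real.log (1 / ∑ x ∈ univ.filter (fun x => 0 < V x y), P x)
      ≤ ∑ x ∈ univ.filter (fun x => 0 < V x y),
          P x * V x y * Real.log (V x y / ∑ x', P x' * V x' y) := hk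
    _ = ∑ x, if 0 < V x y then
          P x * V x y * Real.log (V x y / ∑ x', P x' * V x' y) else 0 :=
        Finset.sum_filter _ _
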